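/- A skew quadrilateral P₁P₂P₃P₄ in ℝ³ whose opposite sides have equal lengths, ‖P₁−P₂‖ = ‖P₃−P₄‖ and ‖P₂−P₃‖ = ‖P₄−P₁‖, admits a line ℓ such that the half-turn (rotation by π) about ℓ maps P₁ ↦ P₃, P₂ ↦ P₄, P₃ ↦ P₁, P₄ ↦ P₂; in particular ℓ passes through the midpoints of the diagonals P₁P₃ and P₂P₄. -/

import Mathlib

/-- In `ℝ³`, there is always a unit vector orthogonal to any two given vectors. -/
lemma exists_unit_orth (a b : Fin 3 → ℝ) :
    ∃ u : Fin 3 → ℝ, (∑ k, (u k) ^ 2 = 1) ∧ (∑ k, a k * u k = 0) ∧ (∑ k, b k * u k = 0) := by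
  classical
  let E := EuclideanSpace ℝ (Fin 3)
  let a' : E := WithLp.toLp 2 a
  let b' : E := WithLp.toLp 2 b
  let K : Submodule ℝ E := Submodule.span ℝ {a', b'}
  have hfr : Module.finrank ℝ E = 3 := by simp [E]
  have hK : K ≠ ⊤ := by
    have hlt : K < ⊤ := span_lt_top_of_card_lt_finrank (by
      rw [hfr]
      refine lt_of_le_of_lt ?_ (by norm_num : (2:ℕ) < 3)
      calc ({a', b'} : Set E).toFinset.card
          ≤ (insert a' {b'} : Finset E).card := Finset.card_le_card (by intro x; simp)
        _ ≤ 2 := (Finset.card_insert_le _ _).trans (by simp))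
    exact hlt.ne
  have hbot : Kᗮ ≠ ⊥ := fun h => hK (Submodule.orthogonal_eq_bot_iff.mp h)
  obtain ⟨v, hvK, hv0⟩ := Submodule.exists_mem_ne_zero_of_ne_bot hbot
  have hva : (inner ℝ a' v : ℝ) = 0 := hvK a' (Submodule.subset_span (by simp))
  have hvb : (inner ℝ b' v : ℝ) = 0 := hvK b' (Submodule.subset_span (by simp))
  have hvn : ‖v‖ ≠ 0 := norm_ne_zero_iff.mpr hv0
  have hn : ∑ k, (v : Fin 3 → ℝ) k ^ 2 = ‖v‖ ^ 2 := by
    rw [EuclideanSpace.norm_eq, Real.sq_sqrt (by positivity)]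
    simp [sq_abs]
  have hia : ∑ k, a k * (v : Fin 3 → ℝ) k = 0 := by
    rw [← hva]; simp [PiLp.inner_apply, RCLike.inner_apply, a', E, mul_comm]
  have hib : ∑ k, b k * (v : Fin 3 → ℝ) k = 0 := by
    rw [← hvb]; simp [PiLp.inner_apply, RCLike.inner_apply, b', E, mul_comm]
  refine ⟨fun k => ‖v‖⁻¹ * (v : Fin 3 → ℝ) k, ?_, ?_, ?_⟩
  · have : ∑ k, (‖v‖⁻¹ * (v : Fin 3 → ℝ) k) ^ 2 = ‖v‖⁻¹ ^ 2 * ∑ k, (v : Fin 3 → ℝ) k ^ 2 := by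
      rw [Finset.mul_sum]; exact Finset.sum_congr rfl fun _ _ => by ring
    rw [this, hn]; field_simp
  · have : ∑ k, a k * (‖v‖⁻¹ * (v : Fin 3 → ℝ) k) = ‖v‖⁻¹ * ∑ k, a k * (v : Fin 3 → ℝ) k := by
      rw [Finset.mul_sum]; exact Finset.sum_congr rfl fun _ _ => by ring
    rw [this, hia, mul_zero]
  · have : ∑ k, b k * (‖v‖⁻¹ * (v : Fin 3 → ℝ) k) = ‖v‖⁻¹ * ∑ k, b k * (v : Fin 3 → ℝ) k := by
      rw [Finset.mul_sum]; exact Finset.sum_congr rfl fun _ _ => by ring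
    rw [this, hib, mul_zero]

/-- Squared Euclidean distance in `ℝ³`. -/
noncomputable def sqDist (v w : Fin 3 → ℝ) : ℝ := ∑ k, (v k - w k) ^ 2

/-- The half-turn (rotation by π) about the line through `c` with unit direction `u`:
`x ↦ c + 2⟪x − c, u⟫·u − (x − c)`. -/
noncomputable def halfTurn (c u x : Fin 3 → ℝ) : Fin 3 → ℝ :=
  c + (2 * (∑ k, (x k - c k) * u k)) • u - (x - c)

/-- Cayley: a skew quadrilateral with equal opposite side lengths (a skew isogram)
is line-symmetric; the half-turn about the symmetry axis swaps opposite vertices,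
and the axis passes through the midpoints of both diagonals. -/
theorem skew_isogram_line_symmetric (P₁ P₂ P₃ P₄ : Fin 3 → ℝ)
    (hcol : ¬ Collinear ℝ ({P₁, P₂, P₃, P₄} : Set (Fin 3 → ℝ)))
    (h₁ : sqDist P₁ P₂ = sqDist P₃ P₄)
    (h₂ : sqDist P₂ P₃ = sqDist P₄ P₁) :
    ∃ c u : Fin 3 → ℝ, (∑ k, (u k) ^ 2 = 1) ∧
      halfTurn c u P₁ = P₃ ∧ halfTurn c u P₂ = P₄ ∧
      halfTurn c u P₃ = P₁ ∧ halfTurn c u P₄ = P₂ ∧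
      (∃ lam₁ : ℝ, (1 / 2 : ℝ) • (P₁ + P₃) = c + lam₁ • u) ∧
      (∃ lam₂ : ℝ, (1 / 2 : ℝ) • (P₂ + P₄) = c + lam₂ • u) := by
  have a1 := h₁; have a2 := h₂
  simp only [sqDist, Fin.sum_univ_three] at a1 a2
  have hd1 : (P₂ 0 + P₄ 0 - P₁ 0 - P₃ 0) * (P₁ 0 - P₃ 0)
      + (P₂ 1 + P₄ 1 - P₁ 1 - P₃ 1) * (P₁ 1 - P₃ 1)
      + (P₂ 2 + P₄ 2 - P₁ 2 - P₃ 2) * (P₁ 2 - P₃ 2) = 0 := by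
    linear_combination (a2 - a1) / 2
  have hd2 : (P₂ 0 + P₄ 0 - P₁ 0 - P₃ 0) * (P₂ 0 - P₄ 0)
      + (P₂ 1 + P₄ 1 - P₁ 1 - P₃ 1) * (P₂ 1 - P₄ 1)
      + (P₂ 2 + P₄ 2 - P₁ 2 - P₃ 2) * (P₂ 2 - P₄ 2) = 0 := by
    linear_combination (a1 + a2) / 2
  by_cases hs : ∀ k, P₂ k + P₄ k - P₁ k - P₃ k = 0
  · -- the diagonals have a common midpoint `c`; any unit vector orthogonal to both
    -- diagonals works as axis direction
    obtain ⟨u, hu1, hua, hub⟩ :=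
      exists_unit_orth (fun k => P₁ k - P₃ k) (fun k => P₂ k - P₄ k)
    simp only [Fin.sum_univ_three] at hua hub
    refine ⟨(1 / 2 : ℝ) • (P₁ + P₃), u, hu1, ?_, ?_, ?_, ?_, ⟨0, ?_⟩, ⟨0, ?_⟩⟩
    · funext k
      simp only [halfTurn, Pi.add_apply, Pi.sub_apply, Pi.smul_apply, smul_eq_mul,
        Fin.sum_univ_three]
      linear_combination (u k) * hua
    · funext k
      simp only [halfTurn, Pi.add_apply, Pi.sub_apply, Pi.smul_apply, smul_eq_mul,
        Fin.sum_univ_three]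
      linear_combination (u k) * hub + (u k * u 0) * hs 0 + (u k * u 1) * hs 1
        + (u k * u 2) * hs 2 - hs k
    · funext k
      simp only [halfTurn, Pi.add_apply, Pi.sub_apply, Pi.smul_apply, smul_eq_mul,
        Fin.sum_univ_three]
      linear_combination (-(u k)) * hua
    · funext k
      simp only [halfTurn, Pi.add_apply, Pi.sub_apply, Pi.smul_apply, smul_eq_mul,
        Fin.sum_univ_three]
      linear_combination (-(u k)) * hub + (u k * u 0) * hs 0 + (u k * u 1) * hs 1
        + (u k * u 2) * hs 2 - hs k
    · funext k
      simp only [Pi.add_apply, Pi.smul_apply, smul_eq_mul]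
      ring
    · funext k
      simp only [Pi.add_apply, Pi.smul_apply, smul_eq_mul]
      linear_combination (1 / 2 : ℝ) * hs k
  · -- the diagonals have distinct midpoints; the axis is the line joining them
    push_neg at hs
    obtain ⟨j, hj⟩ := hs
    have hr : 0 < ∑ k, (P₂ k + P₄ k - P₁ k - P₃ k) ^ 2 :=
      Finset.sum_pos' (fun k _ => sq_nonneg _) ⟨j, Finset.mem_univ j, by positivity⟩
    have hrE : ∑ k, (P₂ k + P₄ k - P₁ k - P₃ k) ^ 2
        = (P₂ 0 + P₄ 0 - P₁ 0 - P₃ 0) ^ 2 + (P₂ 1 + P₄ 1 - P₁ 1 - P₃ 1) ^ 2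
          + (P₂ 2 + P₄ 2 - P₁ 2 - P₃ 2) ^ 2 := by
      simp [Fin.sum_univ_three]
    rw [hrE] at hr
    set t : ℝ := Real.sqrt ((P₂ 0 + P₄ 0 - P₁ 0 - P₃ 0) ^ 2 + (P₂ 1 + P₄ 1 - P₁ 1 - P₃ 1) ^ 2
          + (P₂ 2 + P₄ 2 - P₁ 2 - P₃ 2) ^ 2) with htdef
    have ht0 : 0 < t := Real.sqrt_pos.mpr hr
    have ht : t ≠ 0 := ne_of_gt ht0
    have ht2 : t ^ 2 = (P₂ 0 + P₄ 0 - P₁ 0 - P₃ 0) ^ 2 + (P₂ 1 + P₄ 1 - P₁ 1 - P₃ 1) ^ 2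
          + (P₂ 2 + P₄ 2 - P₁ 2 - P₃ 2) ^ 2 := Real.sq_sqrt hr.le
    have hti : t * t⁻¹ = 1 := mul_inv_cancel₀ ht
    clear htdef hj hr hrE
    refine ⟨(1 / 2 : ℝ) • (P₁ + P₃), fun k => t⁻¹ * (P₂ k + P₄ k - P₁ k - P₃ k),
      ?_, ?_, ?_, ?_, ?_, ⟨0, ?_⟩, ⟨t / 2, ?_⟩⟩
    · simp only [Fin.sum_univ_three]
      linear_combination (-(t⁻¹ ^ 2)) * ht2 + (t * t⁻¹ + 1) * hti
    · funext k
      simp only [halfTurn, Pi.add_apply, Pi.sub_apply, Pi.smul_apply, smul_eq_mul,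
        Fin.sum_univ_three]
      linear_combination (t⁻¹ * t⁻¹ * (P₂ k + P₄ k - P₁ k - P₃ k)) * hd1
    · funext k
      simp only [halfTurn, Pi.add_apply, Pi.sub_apply, Pi.smul_apply, smul_eq_mul,
        Fin.sum_univ_three]
      linear_combination (t⁻¹ ^ 2 * (P₂ k + P₄ k - P₁ k - P₃ k)) * hd2
        + (-(t⁻¹ ^ 2) * (P₂ k + P₄ k - P₁ k - P₃ k)) * ht2
        + ((t * t⁻¹ + 1) * (P₂ k + P₄ k - P₁ k - P₃ k)) * hti
    · funext k
      simp only [halfTurn, Pi.add_apply, Pi.sub_apply, Pi.smul_apply, smul_eq_mul,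
        Fin.sum_univ_three]
      linear_combination (-(t⁻¹ * t⁻¹) * (P₂ k + P₄ k - P₁ k - P₃ k)) * hd1
    · funext k
      simp only [halfTurn, Pi.add_apply, Pi.sub_apply, Pi.smul_apply, smul_eq_mul,
        Fin.sum_univ_three]
      linear_combination (-(t⁻¹ ^ 2) * (P₂ k + P₄ k - P₁ k - P₃ k)) * hd2
        + (-(t⁻¹ ^ 2) * (P₂ k + P₄ k - P₁ k - P₃ k)) * ht2
        + ((t * t⁻¹ + 1) * (P₂ k + P₄ k - P₁ k - P₃ k)) * hti
    · funext k
      simp only [Pi.add_apply, Pi.smul_apply, smul_eq_mul]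
      ring
    · funext k
      simp only [Pi.add_apply, Pi.smul_apply, smul_eq_mul]
      linear_combination (-(P₂ k + P₄ k - P₁ k - P₃ k) / 2) * hti
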